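/- For every clockwise elementary cycle C of the planar grid, the sum of the spins of the arcs of C equals 4·Dis(C), where Dis(C) is the number of black cells minus the number of white cells enclosed by C (i.e., lying in the bounded region delimited by C). -/

import Mathlib

open Classical

noncomputable section

abbrev Vtx : Type := ℤ × ℤ
abbrev GArc : Type := Vtx × Vtx

/-- `a` is an arc of the grid graph `Λ⁺`: its endpoints differ by a unit vector. -/
def IsArc (a : GArc) : Prop :=
  (a.2.1 - a.1.1).natAbs + (a.2.2 - a.1.2).natAbs = 1

/-- reversal of an arc -/
def arev (a : GArc) : GArc := (a.2, a.1)

/-- `+1` if the cell with lower-left corner `c` is black, `-1` if it is white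
(checkerboard coloring). -/
def colorSign (c : Vtx) : ℤ := if (c.1 + c.2) % 2 = 0 then 1 else -1

/-- spin of an arc: `+1` if a traveler along the arc has a white cell on its left,
`-1` otherwise. -/
def sp (a : GArc) : ℤ :=
  colorSign a.1 * ((a.2.2 - a.1.2) ^ 2 - (a.2.1 - a.1.1) ^ 2)

/-- the arcs of a path/cycle given by its list of vertices -/
def arcsOf (C : List Vtx) : List GArc := C.zip C.tail

/-- sum of a function `g` on arcs over all the arcs of `C` (with multiplicity) -/
def sumOn (g : GArc → ℤ) (C : List Vtx) : ℤ := ((arcsOf C).map g).sum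

/-- a (closed) cycle of the grid -/
def IsCycle (C : List Vtx) : Prop :=
  2 ≤ C.length ∧ C.head? = C.getLast? ∧ ∀ a ∈ arcsOf C, IsArc a

/-- an elementary cycle: no repeated vertex except the endpoints -/
def IsElemCycle (C : List Vtx) : Prop := IsCycle C ∧ C.dropLast.Nodup

/-- contribution of an arc to the winding number of a cycle around the center of
cell `c` (crossings of the horizontal ray going East from the center of `c`). -/
def windTerm (c : Vtx) (a : GArc) : ℤ :=
  if a.1.1 = a.2.1 ∧ c.1 < a.1.1 ∧ min a.1.2 a.2.2 = c.2 then a.2.2 - a.1.2 else 0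

/-- winding number of the cycle `C` around the center of the cell `c` -/
def wind (C : List Vtx) (c : Vtx) : ℤ := sumOn (windTerm c) C

/-- a cycle is clockwise when its winding number around any cell is nonpositive
(`-1` on enclosed cells, `0` elsewhere) -/
def IsClockwise (C : List Vtx) : Prop := ∀ c : Vtx, wind C c ≤ 0

/-- a cell is enclosed by `C` when the winding number of `C` around it is nonzero -/
def Encloses (C : List Vtx) (c : Vtx) : Prop := wind C c ≠ 0

/-- number of black cells minus number of white cells enclosed by a clockwise cycle -/
def Dis (C : List Vtx) : ℤ := -∑ᶠ c : Vtx, wind C c * colorSign c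

/-- 4-adjacency of cells (shared edge) -/
def adj4 (c c' : Vtx) : Prop := (c'.1 - c.1).natAbs + (c'.2 - c.2).natAbs = 1

/-- 8-adjacency of cells (shared vertex at least) -/
def adj8 (c c' : Vtx) : Prop := c ≠ c' ∧ (c'.1 - c.1).natAbs ≤ 1 ∧ (c'.2 - c.2).natAbs ≤ 1

/-- a figure: a nonempty, finite, 4-connected set of cells such that no vertex has
all its incident edges on the boundary (no diagonal pinch, so no vertex
duplication is needed). -/
def IsFigure (F : Finset Vtx) : Prop :=
  F.Nonempty ∧
  (∀ c ∈ F, ∀ c' ∈ F, Relation.ReflTransGen (fun x y => x ∈ F ∧ y ∈ F ∧ adj4 x y) c c') ∧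
  (∀ x y : ℤ,
    ¬((x - 1, y - 1) ∈ F ∧ (x, y) ∈ F ∧ (x, y - 1) ∉ F ∧ (x - 1, y) ∉ F) ∧
    ¬((x, y - 1) ∈ F ∧ (x - 1, y) ∈ F ∧ (x - 1, y - 1) ∉ F ∧ (x, y) ∉ F))

/-- one of the two cells adjacent to the edge `[a]` -/
def cellA (a : GArc) : Vtx :=
  if a.1.2 = a.2.2 then (min a.1.1 a.2.1, a.1.2) else (a.1.1, min a.1.2 a.2.2)

/-- the other cell adjacent to the edge `[a]` -/
def cellB (a : GArc) : Vtx :=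
  if a.1.2 = a.2.2 then (min a.1.1 a.2.1, a.1.2 - 1) else (a.1.1 - 1, min a.1.2 a.2.2)

/-- arcs of the graph `G_F`: the edge `[a]` is a side of a cell of `F` -/
def ArcF (F : Finset Vtx) (a : GArc) : Prop := IsArc a ∧ (cellA a ∈ F ∨ cellB a ∈ F)

/-- boundary arcs of `F`: exactly one of the two adjacent cells is in `F` -/
def BoundaryArcF (F : Finset Vtx) (a : GArc) : Prop :=
  IsArc a ∧ ¬(cellA a ∈ F ↔ cellB a ∈ F)

/-- interior arcs of `F`: both adjacent cells are in `F` -/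
def InteriorArcF (F : Finset Vtx) (a : GArc) : Prop :=
  IsArc a ∧ cellA a ∈ F ∧ cellB a ∈ F

/-- `v` is a corner of the cell with lower-left corner `c` -/
def isCorner (v c : Vtx) : Prop :=
  (v.1 = c.1 ∨ v.1 = c.1 + 1) ∧ (v.2 = c.2 ∨ v.2 = c.2 + 1)

/-- vertices of `G_F`: the corners of the cells of `F` -/
def VF (F : Finset Vtx) : Set Vtx := {v | ∃ c ∈ F, isCorner v c}

/-- a cycle of the graph `G_F` -/
def IsCycleF (F : Finset Vtx) (C : List Vtx) : Prop :=
  2 ≤ C.length ∧ C.head? = C.getLast? ∧ ∀ a ∈ arcsOf C, ArcF F a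

/-- an elementary cycle of the graph `G_F` -/
def IsElemCycleF (F : Finset Vtx) (C : List Vtx) : Prop :=
  IsCycleF F C ∧ C.dropLast.Nodup

/-- number of black cells of `F` minus number of white cells of `F` enclosed by
the clockwise cycle `C` -/
def DisF (F : Finset Vtx) (C : List Vtx) : ℤ := -∑ c ∈ F, wind C c * colorSign c

/-- `ef` is skew-symmetric on the arcs of `G_F` -/
def IsSkewOnF (F : Finset Vtx) (ef : GArc → ℤ) : Prop :=
  ∀ a, ArcF F a → ef (arev a) = -ef a

/-- an equilibrium function of the figure `F` -/
def IsEquilibrium (F : Finset Vtx) (ef : GArc → ℤ) : Prop :=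
  IsSkewOnF F ef ∧
  ∀ C, IsElemCycleF F C → IsClockwise C → sumOn sp C + sumOn ef C = 4 * DisF F C

/-- the four sides of the cell `c`, as canonically oriented arcs -/
def sides (c : Vtx) : List GArc :=
  [((c.1, c.2), (c.1 + 1, c.2)), ((c.1, c.2 + 1), (c.1 + 1, c.2 + 1)),
   ((c.1, c.2), (c.1, c.2 + 1)), ((c.1 + 1, c.2), (c.1 + 1, c.2 + 1))]

/-- a domino tiling of `F`, encoded by the symmetric set `D` of the arcs whose
underlying edges are the central axes of its dominoes: every central axis has
both of its adjacent cells in `F` (dominoes are included in `F`), and every cell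
of `F` is covered by exactly one domino (exactly one of its sides is a central
axis): no overlap and no gap. -/
def IsTiling (F : Finset Vtx) (D : Set GArc) : Prop :=
  (∀ a ∈ D, arev a ∈ D) ∧
  (∀ a ∈ D, IsArc a ∧ cellA a ∈ F ∧ cellB a ∈ F) ∧
  (∀ c ∈ F, ∃! a, a ∈ sides c ∧ a ∈ D)

/-- characteristic function of a tiling: `1` on central axes, `0` elsewhere -/
def chi (D : Set GArc) (a : GArc) : ℤ := if a ∈ D then 1 else 0

/-- the height difference function of a tiling -/
def gT (ef : GArc → ℤ) (D : Set GArc) (a : GArc) : ℤ :=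
  ef a - sp a + 2 * sp a * (1 - 2 * chi D a)

/-- the function `t`: `eq(a)-sp(a)+2` on interior arcs, `eq(a)+sp(a)` on boundary arcs -/
def tArc (F : Finset Vtx) (ef : GArc → ℤ) (a : GArc) : ℤ :=
  if cellA a ∈ F ∧ cellB a ∈ F then ef a - sp a + 2 else ef a + sp a

/-- the function `b`: `eq(a)-sp(a)-2` on interior arcs, `eq(a)+sp(a)` on boundary arcs -/
def bArc (F : Finset Vtx) (ef : GArc → ℤ) (a : GArc) : ℤ :=
  if cellA a ∈ F ∧ cellB a ∈ F then ef a - sp a - 2 else ef a + sp a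

/-- the 8-connected component of the cell `c` in the complement of `F` -/
def comp8 (F : Finset Vtx) (c : Vtx) : Set Vtx :=
  {c' | Relation.ReflTransGen (fun x y => x ∉ F ∧ y ∉ F ∧ adj8 x y) c c'}

/-- `c` belongs to a hole of `F` (a finite 8-connected component of the complement) -/
def IsHoleCell (F : Finset Vtx) (c : Vtx) : Prop := c ∉ F ∧ (comp8 F c).Finite

/-- `c` belongs to `H_∞`, the infinite 8-connected component of the complement -/
def IsHinfCell (F : Finset Vtx) (c : Vtx) : Prop := c ∉ F ∧ ¬(comp8 F c).Finite

/-- `w` is a vertex of `V_F` on the boundary of `H_∞` -/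
def OnOuterBoundary (F : Finset Vtx) (w : Vtx) : Prop :=
  w ∈ VF F ∧ ∃ c, IsHinfCell F c ∧ isCorner w c

/-- vertices on the boundary of `F` -/
def Vb (F : Finset Vtx) : Set Vtx :=
  {v | (∃ c ∈ F, isCorner v c) ∧ ∃ c, c ∉ F ∧ isCorner v c}

/-- `h` belongs to the class `H_F` of height functions -/
def InHF (F : Finset Vtx) (ef : GArc → ℤ) (w0 : Vtx) (h : Vtx → ℤ) : Prop :=
  h w0 = 0 ∧ ∀ a, ArcF F a →
    (h a.2 - h a.1 = bArc F ef a ∨ h a.2 - h a.1 = tArc F ef a)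

/-- `h` is the height function induced by the tiling `D` (based at `w0`) -/
def IsHeightOf (F : Finset Vtx) (ef : GArc → ℤ) (D : Set GArc) (w0 : Vtx)
    (h : Vtx → ℤ) : Prop :=
  h w0 = 0 ∧ ∀ a, ArcF F a → h a.2 - h a.1 = gT ef D a

/-- a critical cycle: an elementary cycle of `G_F` with `t(C) = 0` -/
def CriticalCycle (F : Finset Vtx) (ef : GArc → ℤ) (C : List Vtx) : Prop :=
  IsElemCycleF F C ∧ sumOn (tArc F ef) C = 0

/-- a strongly critical cycle: critical, and `sp(a) = 1` on all its interior arcs -/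
def StronglyCriticalCycle (F : Finset Vtx) (ef : GArc → ℤ) (C : List Vtx) : Prop :=
  CriticalCycle F ef C ∧ ∀ a ∈ arcsOf C, InteriorArcF F a → sp a = 1

/-- two vertices are critically equivalent when some critical cycle passes
through both -/
def critRel (F : Finset Vtx) (ef : GArc → ℤ) (v v' : Vtx) : Prop :=
  ∃ C, CriticalCycle F ef C ∧ v ∈ C ∧ v' ∈ C

/-- the forced component of the vertex `v` (class of the equivalence relation
generated by critical equivalence) -/
def fcomp (F : Finset Vtx) (ef : GArc → ℤ) (v : Vtx) : Set Vtx :=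
  {v' | v' ∈ VF F ∧ Relation.EqvGen (critRel F ef) v v'}

/-- `S` is a forced component of `F` -/
def IsForcedComponent (F : Finset Vtx) (ef : GArc → ℤ) (S : Set Vtx) : Prop :=
  ∃ v ∈ VF F, S = fcomp F ef v

/-- `a` is an arc of the graph `G_T` of the tiling `D` -/
def GTArc (F : Finset Vtx) (ef : GArc → ℤ) (D : Set GArc) (a : GArc) : Prop :=
  ArcF F a ∧ gT ef D a = tArc F ef a

/-- there is a directed path in `G_T` from `u` to `v` -/
def GTReach (F : Finset Vtx) (ef : GArc → ℤ) (D : Set GArc) (u v : Vtx) : Prop :=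
  Relation.ReflTransGen (fun x y => GTArc F ef D (x, y)) u v

/-- the result of an upward flip on the component `S`: add `4` on `S` -/
def flipUpAt (S : Set Vtx) (h : Vtx → ℤ) : Vtx → ℤ :=
  fun v => h v + S.indicator (fun _ => (4 : ℤ)) v

/-- the result of a downward flip on the component `S`: subtract `4` on `S` -/
def flipDownAt (S : Set Vtx) (h : Vtx → ℤ) : Vtx → ℤ :=
  fun v => h v - S.indicator (fun _ => (4 : ℤ)) v

/-- `|h(v_S) - h'(v_S)|` for a representative `v_S` of `S` -/
def compDiff (h h' : Vtx → ℤ) (S : Set Vtx) : ℤ :=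
  if hS : S.Nonempty then |h hS.some - h' hS.some| else 0

/-- the distance `Δ(h,h') = Σ_U |h(v_U) - h'(v_U)|` over forced components `U` -/
def Delta (F : Finset Vtx) (ef : GArc → ℤ) (h h' : Vtx → ℤ) : ℤ :=
  ∑ᶠ S ∈ {S : Set Vtx | IsForcedComponent F ef S}, compDiff h h' S

/-- a sequence of `n` allowed upward flips at forced components distinct from `U_∞` -/
def UpFlipSeq (F : Finset Vtx) (ef : GArc → ℤ) (w0 : Vtx) (f : ℕ → Vtx → ℤ)
    (n : ℕ) : Prop :=
  ∀ i < n, ∃ S, IsForcedComponent F ef S ∧ S ≠ fcomp F ef w0 ∧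
    InHF F ef w0 (f i) ∧ InHF F ef w0 (f (i + 1)) ∧ f (i + 1) = flipUpAt S (f i)

/-- a sequence of `n` allowed (upward or downward) flips, flipping at step `i`
the forced component `s i` (distinct from `U_∞`) -/
def FlipSeq (F : Finset Vtx) (ef : GArc → ℤ) (w0 : Vtx) (f : ℕ → Vtx → ℤ)
    (s : ℕ → Set Vtx) (n : ℕ) : Prop :=
  ∀ i < n, IsForcedComponent F ef (s i) ∧ s i ≠ fcomp F ef w0 ∧
    InHF F ef w0 (f i) ∧ InHF F ef w0 (f (i + 1)) ∧
    (f (i + 1) = flipUpAt (s i) (f i) ∨ f (i + 1) = flipDownAt (s i) (f i))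

/-- the four arcs of the two horizontal edges through `v` (central axes of the
pair of vertical dominoes covering the 2×2 square centered at `v`) -/
def hPairAxes (v : Vtx) : Set GArc :=
  {((v.1 - 1, v.2), v), (v, (v.1 - 1, v.2)), (v, (v.1 + 1, v.2)), ((v.1 + 1, v.2), v)}

/-- the four arcs of the two vertical edges through `v` (central axes of the
pair of horizontal dominoes covering the 2×2 square centered at `v`) -/
def vPairAxes (v : Vtx) : Set GArc :=
  {((v.1, v.2 - 1), v), (v, (v.1, v.2 - 1)), (v, (v.1, v.2 + 1)), ((v.1, v.2 + 1), v)}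

/-- a local flip: replace the pair of dominoes covering a 2×2 square by the
other pair covering the same square -/
def LocalFlip (D D' : Set GArc) : Prop :=
  ∃ v : Vtx, (hPairAxes v ⊆ D ∧ D' = (D \ hPairAxes v) ∪ vPairAxes v) ∨
             (vPairAxes v ⊆ D ∧ D' = (D \ vPairAxes v) ∪ hPairAxes v)

/-- a sequence of `n` local flips between tilings of `F` -/
def LocalFlipSeq (F : Finset Vtx) (g : ℕ → Set GArc) (n : ℕ) : Prop :=
  ∀ i < n, IsTiling F (g i) ∧ IsTiling F (g (i + 1)) ∧ LocalFlip (g i) (g (i + 1))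

/-- `h` is a maximal element of `(H_F, ≤)` -/
def MaximalInHF (F : Finset Vtx) (ef : GArc → ℤ) (w0 : Vtx) (h : Vtx → ℤ) : Prop :=
  InHF F ef w0 h ∧ ∀ h', InHF F ef w0 h' →
    (∀ v ∈ VF F, h v ≤ h' v) → ∀ v ∈ VF F, h' v = h v

/-- `h` is a minimal element of `(H_F, ≤)` -/
def MinimalInHF (F : Finset Vtx) (ef : GArc → ℤ) (w0 : Vtx) (h : Vtx → ℤ) : Prop :=
  InHF F ef w0 h ∧ ∀ h', InHF F ef w0 h' →
    (∀ v ∈ VF F, h' v ≤ h v) → ∀ v ∈ VF F, h' v = h v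

/-- an elementary cycle of `G_F` enclosing a single cell of `F` -/
def AroundSingleCell (F : Finset Vtx) (C : List Vtx) : Prop :=
  IsElemCycleF F C ∧ ∃ c ∈ F, ∀ c' : Vtx, wind C c' ≠ 0 ↔ c' = c

/-- a cycle of `G_F` following clockwise the boundary of a hole of `F`: it
winds `-1` around each cell of the hole and `0` around every other cell -/
def IsClockwiseHoleContour (F : Finset Vtx) (C : List Vtx) : Prop :=
  IsElemCycleF F C ∧ ∃ c₀, IsHoleCell F c₀ ∧
    (∀ c ∈ comp8 F c₀, wind C c = -1) ∧ (∀ c ∉ comp8 F c₀, wind C c = 0)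


noncomputable section SpinAux

/-- contribution of arc `a` to the net upward flow through the vertical edge
with lower endpoint `e` -/
def uT (e : Vtx) (a : GArc) : ℤ :=
  if a.1.1 = a.2.1 ∧ a.1.1 = e.1 ∧ min a.1.2 a.2.2 = e.2 then a.2.2 - a.1.2 else 0

/-- contribution of arc `a` to the net rightward flow through the horizontal edge
with left endpoint `e` -/
def rT (e : Vtx) (a : GArc) : ℤ :=
  if a.1.2 = a.2.2 ∧ a.1.2 = e.2 ∧ min a.1.1 a.2.1 = e.1 then a.2.1 - a.1.1 else 0

/-- net outflow indicator of arc `a` at vertex `v` -/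
def outT (v : Vtx) (a : GArc) : ℤ := (if a.1 = v then 1 else 0) - (if a.2 = v then 1 else 0)

/-- the per-arc integrand -/
def FA (a : GArc) (e : Vtx) : ℤ := (uT e a - rT e a) * colorSign e

lemma cs_right (x y : ℤ) : colorSign (x + 1, y) = -colorSign (x, y) := by
  simp only [colorSign]; split_ifs <;> omega

lemma cs_up (x y : ℤ) : colorSign (x, y + 1) = -colorSign (x, y) := by
  simp only [colorSign]; split_ifs <;> omega

lemma arcsOf_nil : arcsOf [] = [] := rfl
lemma arcsOf_single (v : Vtx) : arcsOf [v] = [] := rfl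
lemma arcsOf_cons₂ (u v : Vtx) (l : List Vtx) :
    arcsOf (u :: v :: l) = (u, v) :: arcsOf (v :: l) := rfl

lemma sumOn_nil (f : GArc → ℤ) : sumOn f [] = 0 := rfl
lemma sumOn_single (f : GArc → ℤ) (v : Vtx) : sumOn f [v] = 0 := rfl
lemma sumOn_cons₂ (f : GArc → ℤ) (u v : Vtx) (l : List Vtx) :
    sumOn f (u :: v :: l) = f (u, v) + sumOn f (v :: l) := rfl

lemma sumOn_congr {f g : GArc → ℤ} {C : List Vtx} (h : ∀ a ∈ arcsOf C, f a = g a) :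
    sumOn f C = sumOn g C := by
  unfold sumOn; rw [List.map_congr_left h]

lemma sumOn_sub (f g : GArc → ℤ) (C : List Vtx) :
    sumOn (fun a => f a - g a) C = sumOn f C - sumOn g C := by
  unfold sumOn
  generalize arcsOf C = l
  induction l with
  | nil => simp
  | cons a l ih => simp [ih]; ring

lemma sumOn_add (f g : GArc → ℤ) (C : List Vtx) :
    sumOn (fun a => f a + g a) C = sumOn f C + sumOn g C := by
  unfold sumOn
  generalize arcsOf C = l
  induction l with
  | nil => simp
  | cons a l ih => simp [ih]; ring

lemma sumOn_eq_zero {f : GArc → ℤ} {C : List Vtx} (h : ∀ a ∈ arcsOf C, f a = 0) :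
    sumOn f C = 0 := by
  rw [sumOn_congr (g := fun _ => 0) h]
  unfold sumOn
  generalize arcsOf C = l
  induction l with
  | nil => simp
  | cons a l ih => simpa using ih

lemma sum_grad (g : Vtx → ℤ) : ∀ (l : List Vtx) (v : Vtx),
    sumOn (fun a => g a.2 - g a.1) (v :: l) = g ((v :: l).getLast (by simp)) - g v := by
  intro l
  induction l with
  | nil => intro v; simp [sumOn_single]
  | cons w l ih =>
      intro v
      rw [sumOn_cons₂, ih w]
      have : (v :: w :: l).getLast (by simp) = (w :: l).getLast (by simp) := by
        rw [List.getLast_cons]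
      rw [this]; ring

lemma sum_grad_closed (g : Vtx → ℤ) {C : List Vtx} (hcl : C.head? = C.getLast?) :
    sumOn (fun a => g a.2 - g a.1) C = 0 := by
  match C with
  | [] => rfl
  | v :: l =>
      rw [sum_grad g l v]
      have h1 : (v :: l).head? = some v := rfl
      have h2 : (v :: l).getLast? = some ((v :: l).getLast (by simp)) := by
        rw [List.getLast?_eq_getLast]
      rw [h1, h2] at hcl
      rw [show (v :: l).getLast (by simp) = v from (Option.some_inj.mp hcl).symm]
      ring

lemma arc_cases {a : GArc} (h : IsArc a) :
    (a.2.1 = a.1.1 + 1 ∧ a.2.2 = a.1.2) ∨ (a.2.1 = a.1.1 - 1 ∧ a.2.2 = a.1.2) ∨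
    (a.2.1 = a.1.1 ∧ a.2.2 = a.1.2 + 1) ∨ (a.2.1 = a.1.1 ∧ a.2.2 = a.1.2 - 1) := by
  unfold IsArc at h; omega

lemma arc_mem {a : GArc} {C : List Vtx} (h : a ∈ arcsOf C) : a.1 ∈ C ∧ a.2 ∈ C := by
  unfold arcsOf at h
  obtain ⟨x, y⟩ := a
  have := List.of_mem_zip h
  exact ⟨this.1, List.mem_of_mem_tail this.2⟩

/-- support of the per-arc integrand is finite -/
lemma FA_support_finite (a : GArc) : (Function.support (FA a)).Finite := by
  apply Set.Finite.subset
    (Set.Finite.insert ((a.1.1, min a.1.2 a.2.2) : Vtx)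
      (Set.finite_singleton ((min a.1.1 a.2.1, a.1.2) : Vtx)))
  intro e he
  simp only [Function.mem_support, FA] at he
  by_contra hn
  simp only [Set.mem_insert_iff, Set.mem_singleton_iff] at hn
  push_neg at hn
  have hu : uT e a = 0 := by
    simp only [uT]
    rw [if_neg]
    rintro ⟨h1, h2, h3⟩
    exact hn.1 (by rw [Prod.ext_iff]; exact ⟨h2.symm, h3.symm⟩)
  have hr : rT e a = 0 := by
    simp only [rT]
    rw [if_neg]
    rintro ⟨h1, h2, h3⟩
    exact hn.2 (by rw [Prod.ext_iff]; exact ⟨h3.symm, h2.symm⟩)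
  rw [hu, hr] at he; simp at he

/-- per-arc expression of the spin as a finite sum over edges -/
lemma sp_eq_finsum {a : GArc} (h : IsArc a) : sp a = ∑ᶠ e, FA a e := by
  obtain ⟨⟨x, y⟩, p, q⟩ := a
  rcases arc_cases h with ⟨h1, h2⟩ | ⟨h1, h2⟩ | ⟨h1, h2⟩ | ⟨h1, h2⟩ <;> simp only at h1 h2
  · -- right
    rw [h1, h2]
    have hmain : ∀ e : Vtx, e ≠ (x, y) → FA ((x, y), (x + 1, y)) e = 0 := by
      rintro ⟨e1, e2⟩ he
      have hne : ¬(e1 = x ∧ e2 = y) := by simpa [Prod.ext_iff] using he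
      have hu : uT (e1, e2) ((x, y), (x + 1, y)) = 0 := by
        simp only [uT]; split_ifs with hh <;> (try simp only [true_and] at hh) <;> omega
      have hr : rT (e1, e2) ((x, y), (x + 1, y)) = 0 := by
        simp only [rT]; split_ifs with hh <;> (try simp only [true_and] at hh) <;> omega
      simp [FA, hu, hr]
    rw [finsum_eq_single _ ((x, y) : Vtx) hmain]
    have hu : uT (x, y) ((x, y), (x + 1, y)) = 0 := by
      simp only [uT]; split_ifs with hh <;> (try simp only [true_and] at hh) <;> omega
    have hr : rT (x, y) ((x, y), (x + 1, y)) = 1 := by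
      simp only [rT]; split_ifs with hh <;> (try simp only [true_and] at hh) <;> omega
    simp only [FA, hu, hr, sp]
    ring
  · -- left
    rw [h1, h2]
    have hmain : ∀ e : Vtx, e ≠ (x - 1, y) → FA ((x, y), (x - 1, y)) e = 0 := by
      rintro ⟨e1, e2⟩ he
      have hne : ¬(e1 = x - 1 ∧ e2 = y) := by simpa [Prod.ext_iff] using he
      have hu : uT (e1, e2) ((x, y), (x - 1, y)) = 0 := by
        simp only [uT]; split_ifs with hh <;> (try simp only [true_and] at hh) <;> omega
      have hr : rT (e1, e2) ((x, y), (x - 1, y)) = 0 := by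
        simp only [rT]; split_ifs with hh <;> (try simp only [true_and] at hh) <;> omega
      simp [FA, hu, hr]
    rw [finsum_eq_single _ ((x - 1, y) : Vtx) hmain]
    have hu : uT (x - 1, y) ((x, y), (x - 1, y)) = 0 := by
      simp only [uT]; split_ifs with hh <;> (try simp only [true_and] at hh) <;> omega
    have hr : rT (x - 1, y) ((x, y), (x - 1, y)) = -1 := by
      simp only [rT]; split_ifs with hh <;> (try simp only [true_and] at hh) <;> omega
    have hc : colorSign ((x - 1 : ℤ), y) = -colorSign (x, y) := by
      have h' := cs_right (x - 1) y
      rw [show ((x : ℤ) - 1 + 1) = x from by ring] at h'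
      omega
    simp only [FA, hu, hr, sp, hc]
    ring
  · -- up
    rw [h1, h2]
    have hmain : ∀ e : Vtx, e ≠ (x, y) → FA ((x, y), (x, y + 1)) e = 0 := by
      rintro ⟨e1, e2⟩ he
      have hne : ¬(e1 = x ∧ e2 = y) := by simpa [Prod.ext_iff] using he
      have hu : uT (e1, e2) ((x, y), (x, y + 1)) = 0 := by
        simp only [uT]; split_ifs with hh <;> (try simp only [true_and] at hh) <;> omega
      have hr : rT (e1, e2) ((x, y), (x, y + 1)) = 0 := by
        simp only [rT]; split_ifs with hh <;> (try simp only [true_and] at hh) <;> omega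
      simp [FA, hu, hr]
    rw [finsum_eq_single _ ((x, y) : Vtx) hmain]
    have hu : uT (x, y) ((x, y), (x, y + 1)) = 1 := by
      simp only [uT]; split_ifs with hh <;> (try simp only [true_and] at hh) <;> omega
    have hr : rT (x, y) ((x, y), (x, y + 1)) = 0 := by
      simp only [rT]; split_ifs with hh <;> (try simp only [true_and] at hh) <;> omega
    simp only [FA, hu, hr, sp]
    ring
  · -- down
    rw [h1, h2]
    have hmain : ∀ e : Vtx, e ≠ (x, y - 1) → FA ((x, y), (x, y - 1)) e = 0 := by
      rintro ⟨e1, e2⟩ he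
      have hne : ¬(e1 = x ∧ e2 = y - 1) := by simpa [Prod.ext_iff] using he
      have hu : uT (e1, e2) ((x, y), (x, y - 1)) = 0 := by
        simp only [uT]; split_ifs with hh <;> (try simp only [true_and] at hh) <;> omega
      have hr : rT (e1, e2) ((x, y), (x, y - 1)) = 0 := by
        simp only [rT]; split_ifs with hh <;> (try simp only [true_and] at hh) <;> omega
      simp [FA, hu, hr]
    rw [finsum_eq_single _ ((x, y - 1) : Vtx) hmain]
    have hu : uT (x, y - 1) ((x, y), (x, y - 1)) = -1 := by
      simp only [uT]; split_ifs with hh <;> (try simp only [true_and] at hh) <;> omega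
    have hr : rT (x, y - 1) ((x, y), (x, y - 1)) = 0 := by
      simp only [rT]; split_ifs with hh <;> (try simp only [true_and] at hh) <;> omega
    have hc : colorSign (x, (y - 1 : ℤ)) = -colorSign (x, y) := by
      have h' := cs_up x (y - 1)
      rw [show ((y : ℤ) - 1 + 1) = y from by ring] at h'
      omega
    simp only [FA, hu, hr, sp, hc]
    ring

/-- per-arc: uT equals the difference of wind terms of horizontally adjacent cells -/
lemma uT_eq_windTerm (e : Vtx) (a : GArc) :
    uT e a = windTerm (e.1 - 1, e.2) a - windTerm e a := by
  simp only [uT, windTerm]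
  split_ifs <;> omega

/-- per-arc discrete divergence identity (vertex balance) -/
lemma key4 {a : GArc} (h : IsArc a) (x y : ℤ) :
    rT (x, y) a - rT (x - 1, y) a + uT (x, y) a - uT (x, y - 1) a = outT (x, y) a := by
  obtain ⟨⟨p, q⟩, r, s⟩ := a
  simp only [rT, uT, outT, Prod.mk.injEq]
  rcases arc_cases h with ⟨h1, h2⟩ | ⟨h1, h2⟩ | ⟨h1, h2⟩ | ⟨h1, h2⟩ <;>
    simp only at h1 h2 <;> split_ifs <;> omega

section Cycle

variable {C : List Vtx}

/-- net upward flow through vertical edges -/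
def Uf (C : List Vtx) (e : Vtx) : ℤ := sumOn (uT e) C
/-- net rightward flow through horizontal edges -/
def Rf (C : List Vtx) (e : Vtx) : ℤ := sumOn (rT e) C

lemma Uf_eq (e : Vtx) : Uf C e = wind C (e.1 - 1, e.2) - wind C e := by
  unfold Uf wind
  rw [← sumOn_sub]
  exact sumOn_congr (fun a _ => uT_eq_windTerm e a)

lemma balance_sum (hcl : C.head? = C.getLast?) (v : Vtx) : sumOn (outT v) C = 0 := by
  rw [sumOn_congr (g := fun a => (if a.2 = v then (-1 : ℤ) else 0) -
      (if a.1 = v then (-1 : ℤ) else 0))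
    (fun a _ => by simp only [outT]; split_ifs <;> omega)]
  exact sum_grad_closed (fun u => if u = v then (-1 : ℤ) else 0) hcl

/-- for a closed cycle, the total net upward crossing of any horizontal line is zero -/
lemma level_sum_zero (hcl : C.head? = C.getLast?) (harcs : ∀ a ∈ arcsOf C, IsArc a) (y : ℤ) :
    sumOn (fun a => if a.1.1 = a.2.1 ∧ min a.1.2 a.2.2 = y then a.2.2 - a.1.2 else 0) C = 0 := by
  have hcongr : ∀ a ∈ arcsOf C,
      (if a.1.1 = a.2.1 ∧ min a.1.2 a.2.2 = y then a.2.2 - a.1.2 else 0) =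
      (if y < a.2.2 then (1 : ℤ) else 0) - (if y < a.1.2 then (1 : ℤ) else 0) := by
    intro a ha
    have h := harcs a ha
    have h' := arc_cases h
    split_ifs <;> omega
  rw [sumOn_congr (g := fun a =>
    (if y < a.2.2 then (1 : ℤ) else 0) - (if y < a.1.2 then (1 : ℤ) else 0)) hcongr]
  exact sum_grad_closed (fun v : Vtx => if y < v.2 then (1 : ℤ) else 0) hcl

variable {B : ℤ} (hB : ∀ v ∈ C, -B ≤ v.1 ∧ v.1 ≤ B ∧ -B ≤ v.2 ∧ v.2 ≤ B)

include hB

/-- far to the west, the winding number equals the total level crossing, hence zero -/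
lemma wind_left (hcl : C.head? = C.getLast?) (harcs : ∀ a ∈ arcsOf C, IsArc a)
    {c : Vtx} (hc : c.1 < -B) : wind C c = 0 := by
  unfold wind
  have hcongr : ∀ a ∈ arcsOf C, windTerm c a =
      (if a.1.1 = a.2.1 ∧ min a.1.2 a.2.2 = c.2 then a.2.2 - a.1.2 else 0) := by
    intro a ha
    have hm := arc_mem ha
    have hb1 := hB a.1 hm.1
    simp only [windTerm]
    split_ifs <;> omega
  rw [sumOn_congr hcongr]
  exact level_sum_zero hcl harcs c.2

lemma Rf_left {x y : ℤ} (hx : x < -B) : Rf C (x, y) = 0 := by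
  unfold Rf
  apply sumOn_eq_zero
  intro a ha
  have hm := arc_mem ha
  have hb1 := hB a.1 hm.1
  have hb2 := hB a.2 hm.2
  simp only [rT]
  split_ifs <;> omega

lemma wind_support_finite (hcl : C.head? = C.getLast?) (harcs : ∀ a ∈ arcsOf C, IsArc a) :
    (Function.support (wind C)).Finite := by
  apply Set.Finite.subset (Set.finite_Icc ((-B, -B) : Vtx) ((B, B) : Vtx))
  rintro ⟨c1, c2⟩ hc
  simp only [Function.mem_support] at hc
  have h1 : ¬(c1 < -B) := fun h => hc (wind_left hB hcl harcs (c := (c1, c2)) h)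
  obtain ⟨a, ha, hne⟩ : ∃ a ∈ arcsOf C, windTerm (c1, c2) a ≠ 0 := by
    by_contra hn
    push_neg at hn
    exact hc (sumOn_eq_zero hn)
  have hm := arc_mem ha
  have hb1 := hB a.1 hm.1
  have hb2 := hB a.2 hm.2
  have : a.1.1 = a.2.1 ∧ c1 < a.1.1 ∧ min a.1.2 a.2.2 = c2 := by
    by_contra hcond
    exact hne (by simp only [windTerm]; rw [if_neg hcond])
  simp only [Set.mem_Icc, Prod.mk_le_mk]
  omega

/-- the rightward flow equals the difference of winding numbers of vertically
adjacent cells — this is where closedness (vertex balance) enters -/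
lemma Rf_eq (hcl : C.head? = C.getLast?) (harcs : ∀ a ∈ arcsOf C, IsArc a) (e : Vtx) :
    Rf C e = wind C e - wind C (e.1, e.2 - 1) := by
  set Φ : ℤ → ℤ → ℤ := fun x y => Rf C (x, y) - wind C (x, y) + wind C (x, y - 1) with hΦ
  have hstep : ∀ x y : ℤ, Φ x y = Φ (x - 1) y := by
    intro x y
    have hU1 := Uf_eq (C := C) (x, y)
    have hU2 := Uf_eq (C := C) (x, y - 1)
    simp only at hU1 hU2
    have hbal : sumOn (fun a => rT (x, y) a - rT (x - 1, y) a + uT (x, y) a - uT (x, y - 1) a) C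
        = 0 := by
      rw [sumOn_congr (fun a ha => key4 (harcs a ha) x y)]
      exact balance_sum hcl (x, y)
    have hsplit : sumOn (fun a => rT (x, y) a - rT (x - 1, y) a + uT (x, y) a - uT (x, y - 1) a) C
        = Rf C (x, y) - Rf C (x - 1, y) + Uf C (x, y) - Uf C (x, y - 1) := by
      have e1 : (fun a => rT (x, y) a - rT (x - 1, y) a + uT (x, y) a - uT (x, y - 1) a) =
          (fun a => ((fun b => rT (x, y) b - rT (x - 1, y) b) a +
            (fun b => uT (x, y) b - uT (x, y - 1) b) a)) := by
        funext a; ring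
      rw [e1, sumOn_add, sumOn_sub, sumOn_sub]
      unfold Rf Uf
      ring
    rw [hsplit] at hbal
    simp only [hΦ]
    rw [hU1, hU2] at hbal
    linarith
  have hiter : ∀ (n : ℕ) (x y : ℤ), Φ (x - n) y = Φ x y := by
    intro n
    induction n with
    | zero => intro x y; norm_num
    | succ k ih =>
        intro x y
        have : (x - (k + 1 : ℕ) : ℤ) = (x - 1) - k := by push_cast; ring
        rw [this, ih (x - 1) y, ← hstep x y]
  have hzero : ∀ x y : ℤ, x < -B → Φ x y = 0 := by
    intro x y hx
    simp only [hΦ]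
    rw [Rf_left hB hx, wind_left hB hcl harcs (c := (x, y)) (by simpa using hx),
      wind_left hB hcl harcs (c := (x, y - 1)) (by simpa using hx)]
    ring
  obtain ⟨x, y⟩ := e
  have key : Φ x y = 0 := by
    obtain ⟨n, hn⟩ : ∃ n : ℕ, (x - n : ℤ) < -B := by
      refine ⟨(x + B + 1).toNat, by omega⟩
    rw [← hiter n x y]
    exact hzero _ y hn
  simp only [hΦ] at key
  simp only
  linarith

end Cycle

/-- swapping a list sum with a finsum of finitely supported functions -/
lemma listsum_support_finite (l : List GArc) :
    (Function.support fun e => (l.map (fun a => FA a e)).sum).Finite := by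
  induction l with
  | nil => simp
  | cons a l ih =>
      apply Set.Finite.subset ((FA_support_finite a).union ih)
      intro e he
      simp only [Function.mem_support, List.map_cons, List.sum_cons] at he
      by_contra hn
      simp only [Set.mem_union, Function.mem_support, not_or, not_not] at hn
      rw [hn.1, hn.2] at he
      simp at he

lemma listsum_finsum_swap (l : List GArc) :
    (l.map (fun a => ∑ᶠ e, FA a e)).sum = ∑ᶠ e, (l.map (fun a => FA a e)).sum := by
  induction l with
  | nil => simp
  | cons a l ih =>
      simp only [List.map_cons, List.sum_cons]
      rw [ih, ← finsum_add_distrib (FA_support_finite a) (listsum_support_finite l)]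

lemma lsum_mul {α : Type*} (l : List α) (f : α → ℤ) (c : ℤ) :
    (l.map fun a => f a * c).sum = (l.map f).sum * c := by
  induction l with
  | nil => simp
  | cons a l ih => simp [ih]; ring

lemma lsum_sub {α : Type*} (l : List α) (f g : α → ℤ) :
    (l.map fun a => f a - g a).sum = (l.map f).sum - (l.map g).sum := by
  induction l with
  | nil => simp
  | cons a l ih => simp [ih]; ring

end SpinAux

end
/-- For every clockwise elementary cycle `C` of the planar grid,
`sp(C) = 4·Dis(C)`. -/
theorem spin_sum_eq_four_mul_dis (C : List Vtx)
    (hC : IsElemCycle C) (hcw : IsClockwise C) :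
    sumOn sp C = 4 * Dis C := by
  obtain ⟨⟨h2len, hcl, harcs⟩, -⟩ := hC
  -- a bound on the coordinates of the vertices of C
  set B : ℤ := (C.map (fun v => |v.1| + |v.2|)).sum with hBdef
  have hB : ∀ v ∈ C, -B ≤ v.1 ∧ v.1 ≤ B ∧ -B ≤ v.2 ∧ v.2 ≤ B := by
    intro v hv
    have hle : |v.1| + |v.2| ≤ B := by
      apply List.single_le_sum (l := C.map (fun v => |v.1| + |v.2|))
      · intro x hx
        simp only [List.mem_map] at hx
        obtain ⟨u, -, rfl⟩ := hx
        positivity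
      · exact List.mem_map_of_mem hv
    constructor
    · have := abs_nonneg v.2; have := neg_abs_le v.1; omega
    refine ⟨?_, ?_, ?_⟩
    · have := abs_nonneg v.2; have := le_abs_self v.1; omega
    · have := abs_nonneg v.1; have := neg_abs_le v.2; omega
    · have := abs_nonneg v.1; have := le_abs_self v.2; omega
  have hwfin : (Function.support (wind C)).Finite := wind_support_finite hB hcl harcs
  -- finiteness of the supports of the three summands
  let τ : Vtx ≃ Vtx :=
    ⟨fun e => (e.1 - 1, e.2), fun e => (e.1 + 1, e.2),
      fun e => by obtain ⟨a, b⟩ := e; simp,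
      fun e => by obtain ⟨a, b⟩ := e; simp⟩
  let σ : Vtx ≃ Vtx :=
    ⟨fun e => (e.1, e.2 - 1), fun e => (e.1, e.2 + 1),
      fun e => by obtain ⟨a, b⟩ := e; simp,
      fun e => by obtain ⟨a, b⟩ := e; simp⟩
  have hf1 : (Function.support fun e : Vtx => wind C (e.1 - 1, e.2) * colorSign e).Finite := by
    apply Set.Finite.subset (hwfin.preimage ((τ.injective).injOn))
    intro e he
    simp only [Function.mem_support] at he
    simp only [Set.mem_preimage, Function.mem_support]
    intro hz
    apply he
    show wind C (τ e) * colorSign e = 0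
    rw [hz]; ring
  have hf2 : (Function.support fun e : Vtx => wind C (e.1, e.2 - 1) * colorSign e).Finite := by
    apply Set.Finite.subset (hwfin.preimage ((σ.injective).injOn))
    intro e he
    simp only [Function.mem_support] at he
    simp only [Set.mem_preimage, Function.mem_support]
    intro hz
    apply he
    show wind C (σ e) * colorSign e = 0
    rw [hz]; ring
  have hf3 : (Function.support fun e : Vtx => -2 * (wind C e * colorSign e)).Finite := by
    apply Set.Finite.subset hwfin
    intro e he
    simp only [Function.mem_support] at he ⊢
    intro hz
    apply he
    rw [hz]; ring
  have hf4 : (Function.support fun e : Vtx => wind C e * colorSign e).Finite := by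
    apply Set.Finite.subset hwfin
    intro e he
    simp only [Function.mem_support] at he ⊢
    intro hz
    apply he
    rw [hz]; ring
  have key : sumOn sp C =
      (∑ᶠ e : Vtx, wind C (e.1 - 1, e.2) * colorSign e +
        ∑ᶠ e : Vtx, wind C (e.1, e.2 - 1) * colorSign e) +
      ∑ᶠ e : Vtx, -2 * (wind C e * colorSign e) := by
    calc sumOn sp C
        = ((arcsOf C).map (fun a => ∑ᶠ e, FA a e)).sum := by
          unfold sumOn
          exact congrArg _ (List.map_congr_left (fun a ha => sp_eq_finsum (harcs a ha)))
      _ = ∑ᶠ e, ((arcsOf C).map (fun a => FA a e)).sum := listsum_finsum_swap _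
      _ = ∑ᶠ e, (Uf C e - Rf C e) * colorSign e := by
          apply finsum_congr
          intro e
          calc ((arcsOf C).map (fun a => FA a e)).sum
              = ((arcsOf C).map (fun a => uT e a - rT e a)).sum * colorSign e :=
                lsum_mul (arcsOf C) (fun a => uT e a - rT e a) (colorSign e)
            _ = (Uf C e - Rf C e) * colorSign e :=
                congrArg (fun z => z * colorSign e)
                  (lsum_sub (arcsOf C) (fun a => uT e a) (fun a => rT e a))
      _ = ∑ᶠ e : Vtx, ((wind C (e.1 - 1, e.2) * colorSign e +
            wind C (e.1, e.2 - 1) * colorSign e) + -2 * (wind C e * colorSign e)) := by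
          apply finsum_congr
          intro e
          rw [Uf_eq, Rf_eq hB hcl harcs]
          ring
      _ = _ := by
          rw [finsum_add_distrib ((hf1.union hf2).subset (Function.support_add _ _)) hf3,
            finsum_add_distrib hf1 hf2]
  have P1 : ∑ᶠ e : Vtx, wind C (e.1 - 1, e.2) * colorSign e =
      ∑ᶠ e : Vtx, -(wind C e * colorSign e) := by
    have heq : (fun e : Vtx => wind C (e.1 - 1, e.2) * colorSign e) =
        fun e : Vtx => (fun x : Vtx => -(wind C x * colorSign x)) (τ e) := by
      funext e
      obtain ⟨a, b⟩ := e
      show wind C (a - 1, b) * colorSign (a, b) = -(wind C (a - 1, b) * colorSign (a - 1, b))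
      have h' := cs_right (a - 1) b
      rw [show ((a : ℤ) - 1 + 1) = a from by ring] at h'
      rw [h']
      ring
    rw [heq]; exact finsum_comp_equiv τ (f := fun x : Vtx => -(wind C x * colorSign x))
  have P2 : ∑ᶠ e : Vtx, wind C (e.1, e.2 - 1) * colorSign e =
      ∑ᶠ e : Vtx, -(wind C e * colorSign e) := by
    have heq : (fun e : Vtx => wind C (e.1, e.2 - 1) * colorSign e) =
        fun e : Vtx => (fun x : Vtx => -(wind C x * colorSign x)) (σ e) := by
      funext e
      obtain ⟨a, b⟩ := e
      show wind C (a, b - 1) * colorSign (a, b) = -(wind C (a, b - 1) * colorSign (a, b - 1))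
      have h' := cs_up a (b - 1)
      rw [show ((b : ℤ) - 1 + 1) = b from by ring] at h'
      rw [h']
      ring
    rw [heq]; exact finsum_comp_equiv σ (f := fun x : Vtx => -(wind C x * colorSign x))
  have Pneg : ∑ᶠ e : Vtx, -(wind C e * colorSign e) =
      -∑ᶠ e : Vtx, wind C e * colorSign e := finsum_neg_distrib _
  have P3 : ∑ᶠ e : Vtx, -2 * (wind C e * colorSign e) =
      -2 * ∑ᶠ e : Vtx, wind C e * colorSign e :=
    (mul_finsum _ _).symm
  rw [key, P1, P2, Pneg, P3]
  unfold Dis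
  ring
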